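/- Let (G,M,I) be a finite context with ∅'' = ∅ and let T be a set of nonempty extents of (G,M,I). Then the following are equivalent: (i) T is a complete classification tree (in the lattice of extents of (G,M,I) ordered by inclusion); (ii) every member of T is a box extent, T is a classification tree in the box extent lattice B(G,M,I), and every maximal antichain of (T, ⊆) is a maximal orthogonal system in B(G,M,I), i.e., a family of pairwise disjoint nonempty box extents that cannot be enlarged by any further nonempty box extent disjoint from all of its members. -/

import Mathlib

open Set

variable {G M : Type*}

/-- The attribute-derivation `A'` of a set of objects (the restricted relation of a
subcontext agrees with `I` on its object set, so no restriction is needed here). -/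
def polarUp (I : G → M → Prop) (A : Set G) : Set M := {m | ∀ g ∈ A, I g m}

/-- The object-derivation `B'` of a set of attributes, computed in the subcontext whose
object set is `H` (relation `I ∩ H×M`). -/
def polarDown (I : G → M → Prop) (H : Set G) (B : Set M) : Set G :=
  {g | g ∈ H ∧ ∀ m ∈ B, I g m}

/-- The closure `A''` computed in the subcontext with object set `H`.
Taking `H = Set.univ` gives the closure in the full context `(G,M,I)`. -/
def cl2 (I : G → M → Prop) (H A : Set G) : Set G := polarDown I H (polarUp I A)

/-- `A` is an extent of the subcontext with object set `H`. -/
def IsExtent (I : G → M → Prop) (H A : Set G) : Prop := A ⊆ H ∧ cl2 I H A = A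

/-- An extent partition of the subcontext with object set `H`: a partition of `H`
all of whose classes are extents. -/
def IsExtentPartition (I : G → M → Prop) (H : Set G) (π : Set (Set G)) : Prop :=
  (∀ A ∈ π, A.Nonempty) ∧ π.Pairwise Disjoint ∧ ⋃₀ π = H ∧ ∀ A ∈ π, IsExtent I H A

/-- `E` is a box extent of the subcontext with object set `H`: a class of some extent
partition, or `∅''`. -/
def IsBoxExtent (I : G → M → Prop) (H E : Set G) : Prop :=
  (∃ π : Set (Set G), IsExtentPartition I H π ∧ E ∈ π) ∨ E = cl2 I H ∅

/-- The finest extent partition: every class of every extent partition is a union of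
its classes. -/
def IsFinestExtentPartition (I : G → M → Prop) (H : Set G) (π : Set (Set G)) : Prop :=
  IsExtentPartition I H π ∧
    ∀ σ : Set (Set G), IsExtentPartition I H σ → ∀ A ∈ σ, ∃ S ⊆ π, A = ⋃₀ S

/-- A classification tree in the box extent lattice of the subcontext with object set
`H`: a set of nonempty box extents such that for every nonempty box extent `X`,
`{E ∈ T | X ⊆ E}` is a nonempty chain under inclusion. -/
def IsBoxClassTree (I : G → M → Prop) (H : Set G) (T : Set (Set G)) : Prop :=
  (∀ E ∈ T, E.Nonempty ∧ IsBoxExtent I H E) ∧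
  ∀ X : Set G, X.Nonempty → IsBoxExtent I H X →
    ({E ∈ T | X ⊆ E}.Nonempty ∧ IsChain (· ⊆ ·) {E ∈ T | X ⊆ E})

/-- A maximal classification tree in the box extent lattice. -/
def IsMaxBoxClassTree (I : G → M → Prop) (H : Set G) (T : Set (Set G)) : Prop :=
  IsBoxClassTree I H T ∧ ∀ T' : Set (Set G), IsBoxClassTree I H T' → T ⊆ T' → T' = T

/-- A classification tree in the lattice of extents of the full context `(G,M,I)`:
a set of nonempty extents such that for every nonempty extent `X`, `{E ∈ T | X ⊆ E}`
is a nonempty chain under inclusion. -/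
def IsExtClassTree (I : G → M → Prop) (T : Set (Set G)) : Prop :=
  (∀ E ∈ T, E.Nonempty ∧ IsExtent I Set.univ E) ∧
  ∀ X : Set G, X.Nonempty → IsExtent I Set.univ X →
    ({E ∈ T | X ⊆ E}.Nonempty ∧ IsChain (· ⊆ ·) {E ∈ T | X ⊆ E})

/-- `A` is a maximal antichain of `(T, ⊆)`. -/
def IsMaxAntichainIn (T A : Set (Set G)) : Prop :=
  A ⊆ T ∧ IsAntichain (· ⊆ ·) A ∧
    ∀ B : Set (Set G), B ⊆ T → A ⊆ B → IsAntichain (· ⊆ ·) B → B = A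

/-- A complete classification tree in the lattice of extents: every maximal antichain
of `(T, ⊆)` covers `G`. -/
def IsCompleteExtClassTree (I : G → M → Prop) (T : Set (Set G)) : Prop :=
  IsExtClassTree I T ∧
    ∀ A : Set (Set G), IsMaxAntichainIn T A → ⋃₀ A = Set.univ

/-- A maximal orthogonal system in the box extent lattice `B(G,M,I)`: a family of
pairwise disjoint nonempty box extents that cannot be enlarged by any further
nonempty box extent disjoint from all of its members. -/
def IsMaxOrthoSystem (I : G → M → Prop) (A : Set (Set G)) : Prop :=
  (∀ E ∈ A, E.Nonempty ∧ IsBoxExtent I Set.univ E) ∧ A.Pairwise Disjoint ∧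
    ∀ E : Set G, E.Nonempty → IsBoxExtent I Set.univ E →
      (∀ F ∈ A, Disjoint E F) → False


section Helpers

variable {I : G → M → Prop}

lemma subset_cl2_univ (A : Set G) : A ⊆ cl2 I Set.univ A :=
  fun g hg => ⟨trivial, fun _ hm => hm g hg⟩

lemma cl2_mono_univ {A B : Set G} (h : A ⊆ B) :
    cl2 I Set.univ A ⊆ cl2 I Set.univ B :=
  fun g hg => ⟨trivial, fun m hm => hg.2 m (fun x hx => hm x (h hx))⟩

lemma extent_inter {A B : Set G} (hA : IsExtent I Set.univ A)
    (hB : IsExtent I Set.univ B) : IsExtent I Set.univ (A ∩ B) := by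
  refine ⟨Set.subset_univ _, subset_antisymm ?_ (subset_cl2_univ _)⟩
  have h1 : cl2 I Set.univ (A ∩ B) ⊆ cl2 I Set.univ A := cl2_mono_univ Set.inter_subset_left
  have h2 : cl2 I Set.univ (A ∩ B) ⊆ cl2 I Set.univ B := cl2_mono_univ Set.inter_subset_right
  rw [hA.2] at h1
  rw [hB.2] at h2
  exact Set.subset_inter h1 h2

lemma extent_univ : IsExtent I Set.univ (Set.univ : Set G) :=
  ⟨subset_rfl, subset_antisymm (fun _ hg => hg.1) (subset_cl2_univ _)⟩

lemma box_univ (hG : (Set.univ : Set G).Nonempty) :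
    IsBoxExtent I Set.univ (Set.univ : Set G) := by
  left
  refine ⟨{Set.univ}, ⟨?_, Set.pairwise_singleton _ _, Set.sUnion_singleton _, ?_⟩,
    Set.mem_singleton _⟩
  · intro A hA
    rw [Set.mem_singleton_iff] at hA
    rw [hA]; exact hG
  · intro A hA
    rw [Set.mem_singleton_iff] at hA
    rw [hA]; exact extent_univ

lemma box_to_extent (hempty : cl2 I Set.univ (∅ : Set G) = ∅) {E : Set G}
    (h : IsBoxExtent I Set.univ E) : IsExtent I Set.univ E := by
  rcases h with ⟨π, hπ, hE⟩ | rfl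
  · exact hπ.2.2.2 E hE
  · rw [hempty]
    exact ⟨Set.empty_subset _, hempty⟩

lemma box_inter (hempty : cl2 I Set.univ (∅ : Set G) = ∅) {E F : Set G}
    (hE : IsBoxExtent I Set.univ E) (hF : IsBoxExtent I Set.univ F) :
    IsBoxExtent I Set.univ (E ∩ F) := by
  rcases hE with ⟨π, hπ, hEπ⟩ | rfl
  case inr =>
    right; rw [hempty]; exact Set.empty_inter F
  rcases hF with ⟨σ, hσ, hFσ⟩ | rfl
  case inr =>
    right; rw [hempty]; exact Set.inter_empty E
  rcases Set.eq_empty_or_nonempty (E ∩ F) with h | h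
  · right; rw [h, hempty]
  · left
    refine ⟨{C | ∃ A ∈ π, ∃ B ∈ σ, C = A ∩ B ∧ C.Nonempty}, ⟨?_, ?_, ?_, ?_⟩,
      ⟨E, hEπ, F, hFσ, rfl, h⟩⟩
    · rintro C ⟨A, hA, B, hB, rfl, hne⟩; exact hne
    · rintro x ⟨A, hA, B, hB, rfl, -⟩ y ⟨A', hA', B', hB', rfl, -⟩ hxy
      by_cases hAA : A = A'
      · subst hAA
        have hBB : B ≠ B' := fun h' => hxy (by rw [h'])
        exact (hσ.2.1 hB hB' hBB).mono Set.inter_subset_right Set.inter_subset_right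
      · exact (hπ.2.1 hA hA' hAA).mono Set.inter_subset_left Set.inter_subset_left
    · refine subset_antisymm (Set.subset_univ _) ?_
      intro g _
      obtain ⟨A, hA, hgA⟩ : g ∈ ⋃₀ π := by rw [hπ.2.2.1]; trivial
      obtain ⟨B, hB, hgB⟩ : g ∈ ⋃₀ σ := by rw [hσ.2.2.1]; trivial
      exact ⟨A ∩ B, ⟨A, hA, B, hB, rfl, ⟨g, hgA, hgB⟩⟩, hgA, hgB⟩
    · rintro C ⟨A, hA, B, hB, rfl, -⟩
      exact extent_inter (hπ.2.2.2 A hA) (hσ.2.2.2 B hB)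

lemma box_sInter (hempty : cl2 I Set.univ (∅ : Set G) = ∅)
    (hG : (Set.univ : Set G).Nonempty) {s : Set (Set G)} (hs : s.Finite)
    (h : ∀ D ∈ s, IsBoxExtent I Set.univ D) :
    IsBoxExtent I Set.univ (⋂₀ s) := by
  revert h
  refine Set.Finite.induction_on (motive := fun s _ => (∀ D ∈ s, IsBoxExtent I Set.univ D) → IsBoxExtent I Set.univ (⋂₀ s)) s hs (fun _ => ?_) ?_
  · rw [Set.sInter_empty]; exact box_univ hG
  · intro a t _ _ ih h
    rw [Set.sInter_insert]
    exact box_inter hempty (h a (Set.mem_insert _ _))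
      (ih fun D hD => h D (Set.mem_insert_of_mem _ hD))

lemma exists_maxAntichain [Finite G] {T : Set (Set G)} {E : Set G} (hE : E ∈ T) :
    ∃ A : Set (Set G), IsMaxAntichainIn T A ∧ E ∈ A := by
  have hfam : {B : Set (Set G) | B ⊆ T ∧ E ∈ B ∧ IsAntichain (· ⊆ ·) B}.Finite :=
    Set.toFinite _
  have hne : {B : Set (Set G) | B ⊆ T ∧ E ∈ B ∧ IsAntichain (· ⊆ ·) B}.Nonempty :=
    ⟨{E}, Set.singleton_subset_iff.2 hE, rfl, Set.pairwise_singleton _ _⟩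
  obtain ⟨A, hAmem, hAmax⟩ := hfam.exists_maximal hne
  refine ⟨A, ⟨hAmem.1, hAmem.2.2, ?_⟩, hAmem.2.1⟩
  intro B hBT hAB hBanti
  exact subset_antisymm (hAmax ⟨hBT, hAB hAmem.2.1, hBanti⟩ hAB) hAB

lemma antichain_pairwiseDisjoint {T A : Set (Set G)}
    (hcomp : ∀ E ∈ T, ∀ F ∈ T, (E ∩ F).Nonempty → E ⊆ F ∨ F ⊆ E)
    (hAT : A ⊆ T) (hA : IsAntichain (· ⊆ ·) A) : A.Pairwise Disjoint := by
  intro x hx y hy hxy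
  by_contra hd
  rcases hcomp x (hAT hx) y (hAT hy) (Set.not_disjoint_iff_nonempty_inter.1 hd) with h | h
  · exact hA hx hy hxy h
  · exact hA hy hx (Ne.symm hxy) h

lemma comp_of_extTree {T : Set (Set G)} (hTree : IsExtClassTree I T) :
    ∀ E ∈ T, ∀ F ∈ T, (E ∩ F).Nonempty → E ⊆ F ∨ F ⊆ E := by
  intro E hE F hF hne
  have hEF : IsExtent I Set.univ (E ∩ F) :=
    extent_inter (hTree.1 E hE).2 (hTree.1 F hF).2
  obtain ⟨-, hchain⟩ := hTree.2 _ hne hEF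
  by_cases h : E = F
  · exact Or.inl h.subset
  · exact hchain ⟨hE, Set.inter_subset_left⟩ ⟨hF, Set.inter_subset_right⟩ h

lemma comp_of_boxTree (hempty : cl2 I Set.univ (∅ : Set G) = ∅) {T : Set (Set G)}
    (hBox : ∀ E ∈ T, IsBoxExtent I Set.univ E)
    (hBTree : IsBoxClassTree I Set.univ T) :
    ∀ E ∈ T, ∀ F ∈ T, (E ∩ F).Nonempty → E ⊆ F ∨ F ⊆ E := by
  intro E hE F hF hne
  have hEF := box_inter hempty (hBox E hE) (hBox F hF)
  obtain ⟨-, hchain⟩ := hBTree.2 _ hne hEF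
  by_cases h : E = F
  · exact Or.inl h.subset
  · exact hchain ⟨hE, Set.inter_subset_left⟩ ⟨hF, Set.inter_subset_right⟩ h

end Helpers

/-- A set `T` of nonempty extents is a complete classification tree iff each member is a
box extent, `T` is a classification tree in the box extent lattice, and every maximal
antichain of `(T,⊆)` is a maximal orthogonal system in `B(G,M,I)`. -/

theorem completeExtClassTree_iff_boxClassTree
    [Fintype G] [Fintype M] (I : G → M → Prop)
    (hempty : cl2 I Set.univ (∅ : Set G) = ∅)
    (T : Set (Set G)) (hT : ∀ E ∈ T, E.Nonempty ∧ IsExtent I Set.univ E) :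
    IsCompleteExtClassTree I T ↔
      ((∀ E ∈ T, IsBoxExtent I Set.univ E) ∧ IsBoxClassTree I Set.univ T ∧
        ∀ A : Set (Set G), IsMaxAntichainIn T A → IsMaxOrthoSystem I A) := by
  constructor
  · rintro ⟨hTree, hCov⟩
    have hcomp := comp_of_extTree hTree
    have hbox : ∀ E ∈ T, IsBoxExtent I Set.univ E := by
      intro E hE
      obtain ⟨A, hAmax, hEA⟩ := exists_maxAntichain hE
      left
      exact ⟨A, ⟨fun F hF => (hT F (hAmax.1 hF)).1,
        antichain_pairwiseDisjoint hcomp hAmax.1 hAmax.2.1,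
        hCov A hAmax,
        fun F hF => (hT F (hAmax.1 hF)).2⟩, hEA⟩
    refine ⟨hbox, ⟨fun E hE => ⟨(hT E hE).1, hbox E hE⟩, ?_⟩, ?_⟩
    · intro X hXne hXbox
      exact hTree.2 X hXne (box_to_extent hempty hXbox)
    · intro A hAmax
      refine ⟨fun F hF => ⟨(hT F (hAmax.1 hF)).1, hbox F (hAmax.1 hF)⟩,
        antichain_pairwiseDisjoint hcomp hAmax.1 hAmax.2.1, ?_⟩
      intro E hEne hEbox hdisj
      obtain ⟨g, hg⟩ := hEne
      have hgU : g ∈ ⋃₀ A := by rw [hCov A hAmax]; trivial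
      obtain ⟨F, hF, hgF⟩ := hgU
      exact Set.disjoint_left.1 (hdisj F hF) hg hgF
  · rintro ⟨hbox, hBTree, hOrtho⟩
    have hcomp := comp_of_boxTree hempty hbox hBTree
    have hTree : IsExtClassTree I T := by
      refine ⟨hT, ?_⟩
      intro X hXne hXext
      obtain ⟨g, hg⟩ := hXne
      have hGne : (Set.univ : Set G).Nonempty := ⟨g, trivial⟩
      obtain ⟨⟨U, hUT, hU⟩, -⟩ := hBTree.2 Set.univ hGne (box_univ hGne)
      constructor
      · exact ⟨U, hUT, fun x _ => hU (Set.mem_univ x)⟩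
      · intro E hE F hF hEF
        exact hcomp E hE.1 F hF.1 ⟨g, hE.2 hg, hF.2 hg⟩
    refine ⟨hTree, ?_⟩
    intro A hAmax
    have hOA := hOrtho A hAmax
    by_contra hneq
    obtain ⟨g, hg⟩ : ∃ g, g ∉ ⋃₀ A := by
      by_contra h
      push_neg at h
      exact hneq (Set.eq_univ_of_forall h)
    have hGne : (Set.univ : Set G).Nonempty := ⟨g, trivial⟩
    have hchoice : ∀ F ∈ A, ∃ D : Set G, g ∈ D ∧ IsBoxExtent I Set.univ D ∧ Disjoint D F := by
      intro F hF
      rcases (hOA.1 F hF).2 with ⟨σ, hσ, hFσ⟩ | hFe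
      · obtain ⟨D, hDσ, hgD⟩ : g ∈ ⋃₀ σ := by rw [hσ.2.2.1]; trivial
        refine ⟨D, hgD, Or.inl ⟨σ, hσ, hDσ⟩, ?_⟩
        have hDF : D ≠ F := fun h => hg ⟨F, hF, h ▸ hgD⟩
        exact hσ.2.1 hDσ hFσ hDF
      · exfalso
        have hFne := (hOA.1 F hF).1
        rw [hFe, hempty] at hFne
        exact Set.not_nonempty_empty hFne
    choose! d hd1 hd2 hd3 using hchoice
    have hEbox : IsBoxExtent I Set.univ (⋂₀ (d '' A)) :=
      box_sInter hempty hGne ((Set.toFinite A).image d)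
        (by rintro D ⟨F, hF, rfl⟩; exact hd2 F hF)
    have hgE : g ∈ ⋂₀ (d '' A) :=
      Set.mem_sInter.2 (by rintro D ⟨F, hF, rfl⟩; exact hd1 F hF)
    refine hOA.2.2 (⋂₀ (d '' A)) ⟨g, hgE⟩ hEbox ?_
    intro F hF
    have hsub : ⋂₀ (d '' A) ⊆ d F := fun x hx => (Set.mem_sInter.1 hx) _ ⟨F, hF, rfl⟩
    exact (hd3 F hF).mono_left hsub
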